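/- The map S̃ := S ∘ d is a homomorphism for the harmonic product: S̃(u ∗ v) = S̃(u) ∗ S̃(v) for all u, v ∈ H¹. -/

import Mathlib

open scoped BigOperators

/-- `H¹`: the ℚ-vector space with basis the words `z_{k₁}⋯z_{k_r}` in the letters
`z_k` (`k` a positive integer), encoded as finitely supported functions on lists. -/
abbrev H1 : Type := List ℕ+ →₀ ℚ

/-- The basis word `z_{k₁}⋯z_{k_r}` of `H¹` (the empty list is the unit `1`). -/
noncomputable def W (l : List ℕ+) : H1 := Finsupp.single l 1

/-- Left multiplication by the letter `z_k` (linear extension of `w ↦ z_k w`). -/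
noncomputable def consL (k : ℕ+) (h : H1) : H1 := Finsupp.mapDomain (fun w => k :: w) h

/-- Right multiplication by the letter `z_k` (linear extension of `w ↦ w z_k`). -/
noncomputable def mulRk (k : ℕ+) (h : H1) : H1 := Finsupp.mapDomain (fun w => w ++ [k]) h

/-- The harmonic (stuffle) product on words:
`1 ∗ u = u ∗ 1 = u`, `z_k u ∗ z_l v = z_k(u ∗ z_l v) + z_l(z_k u ∗ v) + z_{k+l}(u ∗ v)`. -/
noncomputable def harmW : List ℕ+ → List ℕ+ → H1
  | [], v => W v
  | u, [] => W u
  | k :: u, l :: v =>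
      consL k (harmW u (l :: v)) + consL l (harmW (k :: u) v) + consL (k + l) (harmW u v)
  termination_by u v => u.length + v.length

/-- The harmonic product `∗` on `H¹`, as the ℚ-bilinear extension of `harmW`. -/
noncomputable def harm (g h : H1) : H1 :=
  g.sum fun u c => h.sum fun v d => (c * d) • harmW u v

/-- The product `ш̃` on words in the letters `z_k`:
`1 ш̃ u = u ш̃ 1 = u`, `z_k u ш̃ z_l v = z_k(u ш̃ z_l v) + z_l(z_k u ш̃ v)`. -/
noncomputable def shtW : List ℕ+ → List ℕ+ → H1
  | [], v => W v
  | u, [] => W u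
  | k :: u, l :: v => consL k (shtW u (l :: v)) + consL l (shtW (k :: u) v)
  termination_by u v => u.length + v.length

/-- The shuffle product `ш̃` on `H¹` (on the alphabet `z₁, z₂, …`), bilinear extension. -/
noncomputable def sht (g h : H1) : H1 :=
  g.sum fun u c => h.sum fun v d => (c * d) • shtW u v

/-- Addition of a natural number to a positive natural number. -/
def pplus (k : ℕ+) (e : ℕ) : ℕ+ := ⟨(k : ℕ) + e, by have := k.pos; omega⟩

/-- `σ_m` on words: `σ_m(z_{k₁}⋯z_{k_r}) = Σ_{e₁+⋯+e_r=m} ∏_j C(k_j+e_j-1, e_j) z_{k₁+e₁}⋯z_{k_r+e_r}`,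
which is the word formula for `σ_m(1) = δ_{m,0}`, `σ_m(yw) = y(w ш x^m)`. -/
noncomputable def sigW : ℕ → List ℕ+ → H1
  | m, [] => if m = 0 then W [] else 0
  | m, k :: ks => ∑ e ∈ Finset.range (m + 1),
      ((((k : ℕ) + e - 1).choose e : ℚ)) • consL (pplus k e) (sigW (m - e) ks)
  termination_by m ks => ks.length

/-- `σ_m : H¹ → H¹`, linear extension. -/
noncomputable def sig (m : ℕ) (h : H1) : H1 := h.sum fun ks c => c • sigW m ks

/-- `S` on words: the word formula for `S(1) = 1`, `S(yw) = y S₁(w)` where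
`S₁(x) = x`, `S₁(y) = x + y`; explicitly `S(z_{k₁}⋯z_{k_r})` is the sum over all ways of
replacing separating commas by `+`. -/
noncomputable def StW : List ℕ+ → H1
  | [] => W []
  | [k] => W [k]
  | k :: l :: ks => consL k (StW (l :: ks)) + StW ((k + l) :: ks)
  termination_by ks => ks.length

/-- `S : H¹ → H¹`, linear extension. -/
noncomputable def St (h : H1) : H1 := h.sum fun ks c => c • StW ks

/-- `S̃ = S ∘ d` on words, where `d(x) = x`, `d(y) = -y`, so `d` multiplies a word of
depth `r` by `(-1)^r`. -/
noncomputable def SttW (ks : List ℕ+) : H1 := ((-1 : ℚ)) ^ ks.length • StW ks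

/-- `S̃ = S ∘ d : H¹ → H¹`, linear extension. -/
noncomputable def Stt (h : H1) : H1 := h.sum fun ks c => c • SttW ks

/-- `ψ` on words: `ψ(z_{k₁}⋯z_{k_r}) = Σ_{i=0}^{r-1} z_{k₁}⋯z_{k_i} ∗ S̃(σ₁(z_{k_r}⋯z_{k_{i+1}}))`. -/
noncomputable def psiW (ks : List ℕ+) : H1 :=
  ∑ i ∈ Finset.range ks.length, harm (W (ks.take i)) (Stt (sigW 1 ((ks.drop i).reverse)))

/-- `ψ : yH → H¹`, linear extension. -/
noncomputable def psi (h : H1) : H1 := h.sum fun ks c => c • psiW ks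

/-- `ψ̄` on words: `ψ̄(z_{k₁}⋯z_{k_r}) = Σ_{i=0}^{r-1} (-1)^{r-i} z_{k₁}⋯z_{k_i} ш̃ σ₁(z_{k_r}⋯z_{k_{i+1}})`. -/
noncomputable def psibW (ks : List ℕ+) : H1 :=
  ∑ i ∈ Finset.range ks.length,
    ((-1 : ℚ)) ^ (ks.length - i) • sht (W (ks.take i)) (sigW 1 ((ks.drop i).reverse))

/-- `ψ̄ : yH → H¹`, linear extension. -/
noncomputable def psib (h : H1) : H1 := h.sum fun ks c => c • psibW ks

/-- `ρ` on words:
`ρ(z_{k₁}⋯z_{k_r}) = Σ_{i=1}^{r} (-1)^{r-i} (z_{k₁}⋯z_{k_{i-1}} ш̃ z_{k_r}⋯z_{k_{i+1}}) z_{k_i}`. -/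
noncomputable def rhoW (ks : List ℕ+) : H1 :=
  ∑ i : Fin ks.length, ((-1 : ℚ)) ^ (ks.length - 1 - (i : ℕ)) •
    mulRk (ks.get i) (sht (W (ks.take (i : ℕ))) (W ((ks.drop ((i : ℕ) + 1)).reverse)))

/-- `ρ : yH → yH`, linear extension. -/
noncomputable def rho (h : H1) : H1 := h.sum fun ks c => c • rhoW ks

/-- `yH ⊆ H¹`: the span of the nonempty words `z_{k₁}⋯z_{k_r}` (`r ≥ 1`). -/
noncomputable def yH1 : Submodule ℚ H1 := Submodule.span ℚ {h | ∃ k ks, h = W (k :: ks)}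

/-- `yH ∗ yH`: the ℚ-span of the harmonic products `w₁ ∗ w₂` with `w₁, w₂ ∈ yH`. -/
noncomputable def harmSpan : Submodule ℚ H1 :=
  Submodule.span ℚ {h | ∃ u ∈ yH1, ∃ v ∈ yH1, h = harm u v}

/-- `yH ш̃ yH`: the ℚ-span of the products `w₁ ш̃ w₂` with `w₁, w₂ ∈ yH`. -/
noncomputable def shtSpan : Submodule ℚ H1 :=
  Submodule.span ℚ {h | ∃ u ∈ yH1, ∃ v ∈ yH1, h = sht u v}


noncomputable section

def mrgW (k : ℕ+) : List ℕ+ → H1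
  | [] => 0
  | l :: w => W ((k + l) :: w)

def mrg (k : ℕ+) : H1 →ₗ[ℚ] H1 :=
  Finsupp.lsum ℚ fun w => LinearMap.toSpanSingleton ℚ H1 (mrgW k w)

def SttL : H1 →ₗ[ℚ] H1 :=
  Finsupp.lsum ℚ fun ks => LinearMap.toSpanSingleton ℚ H1 (SttW ks)

def harmL : H1 →ₗ[ℚ] H1 →ₗ[ℚ] H1 :=
  Finsupp.lsum ℚ fun u => LinearMap.toSpanSingleton ℚ (H1 →ₗ[ℚ] H1)
    (Finsupp.lsum ℚ fun v => LinearMap.toSpanSingleton ℚ H1 (harmW u v))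

lemma single_eq (w : List ℕ+) (c : ℚ) : (Finsupp.single w c : H1) = c • W w := by
  simp [W, Finsupp.smul_single]

lemma mrg_W (k : ℕ+) (w : List ℕ+) : mrg k (W w) = mrgW k w := by
  simp [mrg, W]

lemma SttL_W (ks : List ℕ+) : SttL (W ks) = SttW ks := by
  simp [SttL, W]

lemma harmL_W (u v : List ℕ+) : harmL (W u) (W v) = harmW u v := by
  simp [harmL, W]

lemma Stt_eq (h : H1) : Stt h = SttL h := rfl

lemma harm_eq (g h : H1) : harm g h = harmL g h := by
  unfold harm harmL
  simp [Finsupp.sum, Finsupp.lsum_apply, LinearMap.toSpanSingleton_apply, Finset.smul_sum,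
    mul_smul]

lemma harmW_nil_left (v : List ℕ+) : harmW [] v = W v := by rw [harmW]

lemma harmW_nil_right (u : List ℕ+) : harmW u [] = W u := by
  cases u <;> (rw [harmW]) <;> simp

lemma harmW_cons (k l : ℕ+) (u v : List ℕ+) :
    harmW (k :: u) (l :: v) =
      consL k (harmW u (l :: v)) + consL l (harmW (k :: u) v) + consL (k + l) (harmW u v) := by
  rw [harmW]

lemma consL_W (k : ℕ+) (w : List ℕ+) : consL k (W w) = W (k :: w) := by
  simp [consL, W, Finsupp.mapDomain_single]

lemma consL_add (k : ℕ+) (g h : H1) : consL k (g + h) = consL k g + consL k h :=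
  Finsupp.mapDomain_add

lemma consL_smul (k : ℕ+) (c : ℚ) (h : H1) : consL k (c • h) = c • consL k h :=
  Finsupp.mapDomain_smul c h

lemma consL_zero (k : ℕ+) : consL k (0 : H1) = 0 := Finsupp.mapDomain_zero

lemma consL_neg (k : ℕ+) (h : H1) : consL k (-h) = -consL k h := by
  rw [← neg_one_smul ℚ h, consL_smul, neg_one_smul]

lemma StW_nil : StW [] = W [] := by rw [StW]

lemma StW_single (k : ℕ+) : StW [k] = W [k] := by rw [StW]

lemma StW_cons (k l : ℕ+) (ks : List ℕ+) :
    StW (k :: l :: ks) = consL k (StW (l :: ks)) + StW ((k + l) :: ks) := by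
  rw [StW]

lemma mrg_nil (k : ℕ+) : mrg k (W []) = 0 := by rw [mrg_W]; rfl

lemma mrg_consL (k l : ℕ+) (h : H1) : mrg k (consL l h) = consL (k + l) h := by
  induction h using Finsupp.induction_linear with
  | zero => simp [consL_zero]
  | add f g hf hg => simp [consL_add, hf, hg]
  | single w c =>
      rw [single_eq, consL_smul, map_smul, consL_smul, consL_W, mrg_W, consL_W]
      rfl

lemma mrg_StW (k l : ℕ+) (ks : List ℕ+) : mrg k (StW (l :: ks)) = StW ((k + l) :: ks) := by
  induction ks generalizing l with
  | nil => rw [StW_single, mrg_W, StW_single]; rfl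
  | cons m ks ih =>
      rw [StW_cons, map_add, mrg_consL, ih (l + m), ← add_assoc, StW_cons]

def Ak (k : ℕ+) (h : H1) : H1 := consL k h + mrg k h

lemma Ak_add (k : ℕ+) (g h : H1) : Ak k (g + h) = Ak k g + Ak k h := by
  simp only [Ak, consL_add, map_add]; abel

lemma Ak_smul (k : ℕ+) (c : ℚ) (h : H1) : Ak k (c • h) = c • Ak k h := by
  simp only [Ak, consL_smul, map_smul, smul_add]

lemma Ak_zero (k : ℕ+) : Ak k (0 : H1) = 0 := by simp [Ak, consL_zero]

lemma Ak_neg (k : ℕ+) (h : H1) : Ak k (-h) = -Ak k h := by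
  rw [← neg_one_smul ℚ h, Ak_smul, neg_one_smul]

lemma SttW_nil : SttW [] = W [] := by simp [SttW, StW_nil]

lemma SttW_cons (k : ℕ+) (ks : List ℕ+) : SttW (k :: ks) = -Ak k (SttW ks) := by
  cases ks with
  | nil =>
      simp [SttW, StW_nil, StW_single, Ak, mrg_nil, consL_W]
  | cons l ks =>
      simp only [SttW, List.length_cons]
      rw [StW_cons, Ak_smul]
      show _ = -((- 1:ℚ) ^ (ks.length + 1) • (consL k (StW (l :: ks)) + mrg k (StW (l :: ks))))
      rw [mrg_StW]
      module

lemma SttL_consL (k : ℕ+) (h : H1) : SttL (consL k h) = -Ak k (SttL h) := by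
  induction h using Finsupp.induction_linear with
  | zero => simp [consL_zero, Ak_zero]
  | add f g hf hg => simp only [consL_add, map_add, hf, hg, Ak_add]; abel
  | single w c =>
      rw [single_eq, consL_smul, map_smul, map_smul, Ak_smul, consL_W]
      simp only [SttL_W]
      rw [SttW_cons, smul_neg]

lemma harm_nil_left (h : H1) : harmL (W []) h = h := by
  induction h using Finsupp.induction_linear with
  | zero => simp
  | add f g hf hg => simp [hf, hg]
  | single v d => rw [single_eq, map_smul, harmL_W, harmW_nil_left]

lemma harm_nil_right (g : H1) : harmL g (W []) = g := by
  induction g using Finsupp.induction_linear with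
  | zero => simp
  | add f g hf hg => simp only [map_add, LinearMap.add_apply, hf, hg]
  | single u c =>
      rw [single_eq, map_smul, LinearMap.smul_apply, harmL_W, harmW_nil_right]

lemma harmL_cons_cons (k l : ℕ+) (g h : H1) :
    harmL (consL k g) (consL l h) =
      consL k (harmL g (consL l h)) + consL l (harmL (consL k g) h)
        + consL (k + l) (harmL g h) := by
  induction g using Finsupp.induction_linear with
  | zero => simp [consL_zero]
  | add a b ha hb =>
      simp only [consL_add, map_add, LinearMap.add_apply, ha, hb]; abel
  | single u c =>
      induction h using Finsupp.induction_linear with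
      | zero => simp [consL_zero]
      | add a b ha hb =>
          simp only [consL_add, map_add, ha, hb]; abel
      | single v d =>
          simp only [single_eq, consL_smul, map_smul, LinearMap.smul_apply, consL_W,
            harmL_W, harmW_cons, smul_add]


lemma pac1 : ∀ (x y : ℕ+), x + y = y + x := fun x y => add_comm x y
lemma pac2 : ∀ (x y z : ℕ+), x + y + z = x + (y + z) := fun x y z => add_assoc x y z
lemma pac3 : ∀ (x y z : ℕ+), x + (y + z) = y + (x + z) := fun x y z => add_left_comm x y z

lemma star_words (k l : ℕ+) (u v : List ℕ+) :
    harmL (Ak k (W u)) (Ak l (W v)) =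
      Ak k (harmL (W u) (Ak l (W v))) + Ak l (harmL (Ak k (W u)) (W v))
        - Ak (k + l) (harmL (W u) (W v)) := by
  have SS : ∀ (x : ℕ+) (w : List ℕ+), W (x :: w) = consL x (W w) :=
    fun x w => (consL_W x w).symm
  cases u <;> cases v <;>
    · simp only [SS, Ak, mrg_nil, mrg_consL, add_zero, map_add, LinearMap.add_apply,
        consL_add, harmL_cons_cons, harm_nil_left, harm_nil_right]
      simp only [pac1, pac2, pac3]
      abel

lemma harm_Ak_Ak (k l : ℕ+) (g h : H1) :
    harmL (Ak k g) (Ak l h) =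
      Ak k (harmL g (Ak l h)) + Ak l (harmL (Ak k g) h) - Ak (k + l) (harmL g h) := by
  induction g using Finsupp.induction_linear with
  | zero => simp [Ak_zero]
  | add p q hp hq =>
      simp only [Ak_add, map_add, LinearMap.add_apply, hp, hq]; abel
  | single u c =>
      induction h using Finsupp.induction_linear with
      | zero => simp [Ak_zero]
      | add p q hp hq =>
          simp only [Ak_add, map_add, hp, hq]; abel
      | single v d =>
          simp only [single_eq, Ak_smul, map_smul, LinearMap.smul_apply]
          rw [star_words]
          simp only [smul_add, smul_sub]

lemma main_word : ∀ (n : ℕ) (u v : List ℕ+), u.length + v.length ≤ n →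
    SttL (harmW u v) = harmL (SttW u) (SttW v) := by
  intro n
  induction n with
  | zero =>
      intro u v hle
      obtain rfl : u = [] := List.length_eq_zero_iff.mp (by omega)
      rw [harmW_nil_left, SttL_W, SttW_nil, harm_nil_left]
  | succ n ih =>
      intro u v hle
      match u, v with
      | [], v => rw [harmW_nil_left, SttL_W, SttW_nil, harm_nil_left]
      | (k :: u'), [] => rw [harmW_nil_right, SttL_W, SttW_nil, harm_nil_right]
      | (k :: u'), (l :: v') =>
          have h1 : u'.length + (l :: v').length ≤ n := by
            simp only [List.length_cons] at hle ⊢; omega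
          have h2 : (k :: u').length + v'.length ≤ n := by
            simp only [List.length_cons] at hle ⊢; omega
          have h3 : u'.length + v'.length ≤ n := by
            simp only [List.length_cons] at hle; omega
          rw [harmW_cons, map_add, map_add, SttL_consL, SttL_consL, SttL_consL,
            ih _ _ h1, ih _ _ h2, ih _ _ h3, SttW_cons, SttW_cons]
          simp only [map_neg, LinearMap.neg_apply, Ak_neg, neg_neg]
          rw [harm_Ak_Ak]
          abel

/-- `S̃ = S ∘ d` is a homomorphism for the harmonic product:
`S̃(u ∗ v) = S̃(u) ∗ S̃(v)` for all `u, v ∈ H¹`. -/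
theorem Stt_harm_hom (u v : H1) : Stt (harm u v) = harm (Stt u) (Stt v) := by
  rw [harm_eq, Stt_eq, Stt_eq, Stt_eq, harm_eq]
  induction u using Finsupp.induction_linear with
  | zero => simp
  | add p q hp hq => simp only [map_add, LinearMap.add_apply, hp, hq]
  | single a c =>
      induction v using Finsupp.induction_linear with
      | zero => simp
      | add p q hp hq => simp only [map_add, hp, hq]
      | single b d =>
          simp only [single_eq, map_smul, LinearMap.smul_apply, harmL_W, SttL_W]
          rw [main_word (a.length + b.length) a b le_rfl]
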